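/- Odd integration by parts (odd Stokes theorem, pointwise form): let B : Λ → ℝ be the Berezin integral, i.e. the coefficient of the top basis element e_0 ∧ ⋯ ∧ e_{m-1} in the basis expansion of an element of Λ. Then for every α, every ω ∈ Λ homogeneous of Grassmann parity p, and every η ∈ Λ, one has B(∂_α(ω) * η) = (-1)^(p+1) · B(ω * ∂_α(η)). In particular B(∂_α(x)) = 0 for all x ∈ Λ. -/

import Mathlib

open TensorProduct

noncomputable section

/-- The Grassmann algebra on `n` odd generators `ξ^α`. -/
abbrev Lam (n : ℕ) : Type := ExteriorAlgebra ℝ (Fin n → ℝ)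

/-- The odd coordinate `ξ^α`, i.e. the generator `e_α = ι (Pi.single α 1)`. -/
def gen {n : ℕ} (α : Fin n) : Lam n := ExteriorAlgebra.ι ℝ (Pi.single α 1)

/-- The odd partial derivative `∂/∂ξ^α`: left contraction with the `α`-th
coordinate functional, the unique antiderivation sending `e_β` to `δ_{αβ}`. -/
def pd {n : ℕ} (α : Fin n) : Lam n →ₗ[ℝ] Lam n :=
  CliffordAlgebra.contractLeft (Q := (0 : QuadraticForm ℝ (Fin n → ℝ))) (LinearMap.proj α)

/-- The algebra of (pseudo)differential forms on `ℝ^{0|n}`: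
polynomials in the even fiber coordinates `y^α` with Grassmann coefficients. -/
abbrev Forms (n : ℕ) : Type := MvPolynomial (Fin n) ℝ ⊗[ℝ] Lam n

/-- The de Rham differential `Q = y^α ∂_{ξ^α}`. -/
def deRham (n : ℕ) : Forms n →ₗ[ℝ] Forms n :=
  ∑ α : Fin n, TensorProduct.map (LinearMap.mulLeft ℝ (MvPolynomial.X α)) (pd α)


namespace BerezinAux

variable {m : ℕ}

lemma pd_iota_mul (α : Fin m) (v : Fin m → ℝ) (y : Lam m) :
    pd α (ExteriorAlgebra.ι ℝ v * y) = v α • y - ExteriorAlgebra.ι ℝ v * pd α y := by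
  exact CliffordAlgebra.contractLeft_ι_mul (Q := (0 : QuadraticForm ℝ (Fin m → ℝ)))
    (d := LinearMap.proj α) v y

lemma iota_anticomm (v w : Fin m → ℝ) :
    ExteriorAlgebra.ι ℝ v * ExteriorAlgebra.ι ℝ w
      = -(ExteriorAlgebra.ι ℝ w * ExteriorAlgebra.ι ℝ v) := by
  have h := ExteriorAlgebra.ι_add_mul_swap (R := ℝ) v w
  linear_combination (norm := noncomm_ring) h

/-- The monomial attached to a list of indices. -/
def Ml (l : List (Fin m)) : Lam m := (l.map gen).prod

@[simp] lemma Ml_nil : Ml ([] : List (Fin m)) = 1 := rfl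

@[simp] lemma Ml_cons (a : Fin m) (l : List (Fin m)) : Ml (a :: l) = gen a * Ml l := by
  simp [Ml]

lemma gen_sq (a : Fin m) : gen a * gen a = 0 := ExteriorAlgebra.ι_sq_zero _

lemma gen_anticomm (a b : Fin m) : gen a * gen b = -(gen b * gen a) := iota_anticomm _ _

/-- Span of sorted monomials of length `j`. -/
def T (m j : ℕ) : Submodule ℝ (Lam m) :=
  Submodule.span ℝ {x | ∃ l : List (Fin m), l.Pairwise (· < ·) ∧ l.length = j ∧ Ml l = x}

lemma gen_mul_Ml (l : List (Fin m)) (hl : l.Pairwise (· < ·)) (β : Fin m) :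
    (β ∈ l ∧ gen β * Ml l = 0) ∨
    (β ∉ l ∧ ∃ (c : ℝ) (l' : List (Fin m)), l'.Pairwise (· < ·) ∧ l'.Perm (β :: l) ∧
      gen β * Ml l = c • Ml l') := by
  induction l with
  | nil =>
    right
    exact ⟨by simp, 1, [β], by simp, List.Perm.refl _, by simp⟩
  | cons γ t ih =>
    have hγt : ∀ x ∈ t, γ < x := (List.pairwise_cons.mp hl).1
    have ht : t.Pairwise (· < ·) := (List.pairwise_cons.mp hl).2
    rcases lt_trichotomy β γ with h | h | h
    · right
      refine ⟨?_, 1, β :: γ :: t, ?_, List.Perm.refl _, by simp⟩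
      · intro hmem
        rcases List.mem_cons.mp hmem with rfl | hmem
        · exact lt_irrefl _ h
        · exact absurd h (not_lt.mpr (hγt _ hmem).le)
      · refine List.pairwise_cons.mpr ⟨?_, hl⟩
        intro x hx
        rcases List.mem_cons.mp hx with rfl | hx
        · exact h
        · exact h.trans (hγt _ hx)
    · subst h
      left
      refine ⟨List.mem_cons_self, ?_⟩
      rw [Ml_cons, ← mul_assoc, gen_sq, zero_mul]
    · rcases ih ht with ⟨hmem, hzero⟩ | ⟨hmem, c, l', hl', hperm, heq⟩
      · left
        refine ⟨List.mem_cons_of_mem _ hmem, ?_⟩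
        rw [Ml_cons, ← mul_assoc, gen_anticomm, neg_mul, mul_assoc, hzero, mul_zero, neg_zero]
      · right
        have hβγ : β ∉ γ :: t := by
          intro hx
          rcases List.mem_cons.mp hx with rfl | hx
          · exact lt_irrefl _ h
          · exact hmem hx
        refine ⟨hβγ, -c, γ :: l', ?_, ?_, ?_⟩
        · refine List.pairwise_cons.mpr ⟨?_, hl'⟩
          intro x hx
          have hx' := hperm.mem_iff.mp hx
          rcases List.mem_cons.mp hx' with rfl | h'
          · exact h
          · exact hγt _ h'
        · exact (hperm.cons γ).trans (List.Perm.swap β γ t)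
        · rw [Ml_cons, ← mul_assoc, gen_anticomm, neg_mul, mul_assoc, heq, Ml_cons,
            mul_smul_comm, neg_smul]

lemma gen_mul_mem_T {j : ℕ} (β : Fin m) {x : Lam m} (hx : x ∈ T m j) :
    gen β * x ∈ T m (j + 1) := by
  induction hx using Submodule.span_induction with
  | mem x hx =>
    obtain ⟨l, hl, hlen, rfl⟩ := hx
    rcases gen_mul_Ml l hl β with ⟨_, h0⟩ | ⟨_, c, l', hl', hperm, heq⟩
    · rw [h0]; exact zero_mem _
    · rw [heq]
      exact Submodule.smul_mem _ _ (Submodule.subset_span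
        ⟨l', hl', by simp [hperm.length_eq, hlen], rfl⟩)
  | zero => simp
  | add a b ha hb iha ihb => rw [mul_add]; exact add_mem iha ihb
  | smul c a ha iha => rw [mul_smul_comm]; exact Submodule.smul_mem _ _ iha

lemma iota_mul_mem_T {j : ℕ} (v : Fin m → ℝ) {x : Lam m} (hx : x ∈ T m j) :
    ExteriorAlgebra.ι ℝ v * x ∈ T m (j + 1) := by
  have hv : v = ∑ β : Fin m, v β • (Pi.single β 1 : Fin m → ℝ) := by
    ext γ
    simp [Pi.single_apply]
  rw [hv, map_sum, Finset.sum_mul]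
  refine Submodule.sum_mem _ fun β _ => ?_
  rw [map_smul, smul_mul_assoc]
  exact Submodule.smul_mem _ _ (gen_mul_mem_T β hx)

lemma one_mem_T : (1 : Lam m) ∈ T m 0 :=
  Submodule.subset_span ⟨[], by simp, rfl, rfl⟩

lemma pow_le_T (j : ℕ) :
    (LinearMap.range (ExteriorAlgebra.ι ℝ : (Fin m → ℝ) →ₗ[ℝ] Lam m)) ^ j ≤ T m j := by
  induction j with
  | zero =>
    rw [pow_zero, Submodule.one_eq_span, Submodule.span_le, Set.singleton_subset_iff]
    exact one_mem_T
  | succ j ih =>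
    rw [pow_succ']
    refine Submodule.mul_le.mpr ?_
    rintro a ⟨v, rfl⟩ b hb
    exact iota_mul_mem_T v (ih hb)

lemma B_vanish (B : Lam m →ₗ[ℝ] ℝ)
    (hBother : ∀ s : Finset (Fin m), s ≠ Finset.univ →
      B (((s.sort (· ≤ ·)).map gen).prod) = 0)
    {j : ℕ} (hj : j ≠ m) {x : Lam m} (hx : x ∈ T m j) : B x = 0 := by
  induction hx using Submodule.span_induction with
  | mem x hx =>
    obtain ⟨l, hl, hlen, rfl⟩ := hx
    have hnd : l.Nodup := hl.nodup
    have hsort : l.toFinset.sort (· ≤ ·) = l :=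
      (List.toFinset_sort _ hnd).mpr (hl.imp le_of_lt)
    have hne : l.toFinset ≠ Finset.univ := by
      intro h
      apply hj
      rw [← hlen, ← List.toFinset_card_of_nodup hnd, h, Finset.card_univ, Fintype.card_fin]
    have := hBother l.toFinset hne
    rwa [hsort] at this
  | zero => simp
  | add a b _ _ iha ihb => rw [map_add, iha, ihb, add_zero]
  | smul c a _ iha => rw [map_smul, iha, smul_zero]

lemma pd_one (α : Fin m) : pd α (1 : Lam m) = 0 :=
  CliffordAlgebra.contractLeft_one _ _

lemma pd_gen_mul (α γ : Fin m) (y : Lam m) :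
    pd α (gen γ * y) = ((Pi.single γ 1 : Fin m → ℝ) α) • y - gen γ * pd α y :=
  pd_iota_mul α (Pi.single γ 1) y

lemma pd_Ml_mem (α : Fin m) (l : List (Fin m)) (hl : l.Pairwise (· < ·)) :
    pd α (Ml l) ∈ T m (l.length - 1) := by
  induction l with
  | nil =>
    rw [Ml_nil, pd_one]; exact zero_mem _
  | cons γ t ih =>
    have ht : t.Pairwise (· < ·) := (List.pairwise_cons.mp hl).2
    rw [Ml_cons, pd_gen_mul]
    have h1 : ((Pi.single γ 1 : Fin m → ℝ) α) • Ml t ∈ T m ((γ :: t).length - 1) := by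
      refine Submodule.smul_mem _ _ (Submodule.subset_span ⟨t, ht, ?_, rfl⟩)
      simp
    refine sub_mem h1 ?_
    cases t with
    | nil =>
      rw [Ml_nil, pd_one, mul_zero]
      exact zero_mem _
    | cons δ u =>
      have := gen_mul_mem_T γ (ih ht)
      simpa using this

lemma B_pd_T (hm : 1 ≤ m) (B : Lam m →ₗ[ℝ] ℝ)
    (hBother : ∀ s : Finset (Fin m), s ≠ Finset.univ →
      B (((s.sort (· ≤ ·)).map gen).prod) = 0)
    (α : Fin m) (i : ℕ) {y : Lam m} (hy : y ∈ T m i) : B (pd α y) = 0 := by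
  induction hy using Submodule.span_induction with
  | mem z hz =>
    obtain ⟨l, hl, hlen, rfl⟩ := hz
    have hmem := pd_Ml_mem α l hl
    have hlelen : l.length ≤ m := by
      simpa using hl.nodup.length_le_card
    exact B_vanish B hBother (by omega) hmem
  | zero => simp
  | add a b _ _ iha ihb => rw [map_add, map_add, iha, ihb, add_zero]
  | smul c a _ iha => rw [map_smul, map_smul, iha, smul_zero]

lemma B_pd_zero (hm : 1 ≤ m) (B : Lam m →ₗ[ℝ] ℝ)
    (hBother : ∀ s : Finset (Fin m), s ≠ Finset.univ →
      B (((s.sort (· ≤ ·)).map gen).prod) = 0)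
    (α : Fin m) : ∀ x : Lam m, B (pd α x) = 0 := by
  intro x
  have hx : x ∈ ⨆ i : ℕ,
      (LinearMap.range (ExteriorAlgebra.ι ℝ : (Fin m → ℝ) →ₗ[ℝ] Lam m)) ^ i := by
    rw [CliffordAlgebra.iSup_ι_range_eq_top]; trivial
  refine Submodule.iSup_induction _ (motive := fun y => B (pd α y) = 0) hx
    (fun i y hy => B_pd_T hm B hBother α i (pow_le_T i hy))
    (by simp)
    (fun a b ha hb => ?_)
  have ha' : B (pd α a) = 0 := ha
  have hb' : B (pd α b) = 0 := hb
  show B (pd α (a + b)) = 0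
  rw [map_add, map_add, ha', hb', add_zero]

set_option maxHeartbeats 1000000 in
lemma pd_mul_even (α : Fin m) {ω : Lam m}
    (hω : ω ∈ CliffordAlgebra.evenOdd (0 : QuadraticForm ℝ (Fin m → ℝ)) 0) (η : Lam m) :
    pd α (ω * η) = pd α ω * η + ω * pd α η := by
  revert η
  induction ω, hω using CliffordAlgebra.even_induction with
  | algebraMap r =>
    intro η
    simp only [pd, CliffordAlgebra.contractLeft_algebraMap_mul,
      CliffordAlgebra.contractLeft_algebraMap, zero_mul, zero_add]
  | add x y hx hy ihx ihy =>
    intro η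
    simp only [add_mul, map_add, ihx η, ihy η]
    abel
  | ι_mul_ι_mul m₁ m₂ x hx ihx =>
    intro η
    simp only [mul_assoc, pd_iota_mul, ihx, mul_sub, mul_add, sub_mul, add_mul,
      smul_mul_assoc, mul_smul_comm, smul_sub, smul_add]
    abel

set_option maxHeartbeats 1000000 in
lemma pd_mul_odd (α : Fin m) {ω : Lam m}
    (hω : ω ∈ CliffordAlgebra.evenOdd (0 : QuadraticForm ℝ (Fin m → ℝ)) 1) (η : Lam m) :
    pd α (ω * η) = pd α ω * η - ω * pd α η := by
  revert η
  induction ω, hω using CliffordAlgebra.odd_induction with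
  | ι v =>
    intro η
    rw [pd_iota_mul]
    have : pd α (ExteriorAlgebra.ι ℝ v) = algebraMap ℝ (Lam m) (v α) := by
      rw [pd, CliffordAlgebra.contractLeft_ι]
      rfl
    rw [this, Algebra.smul_def]
  | add x y hx hy ihx ihy =>
    intro η
    simp only [add_mul, map_add, ihx η, ihy η]
    abel
  | ι_mul_ι_mul m₁ m₂ x hx ihx =>
    intro η
    simp only [mul_assoc, pd_iota_mul, ihx, mul_sub, mul_add, sub_mul, add_mul,
      smul_mul_assoc, mul_smul_comm, smul_sub, smul_add]
    abel

end BerezinAux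

/-- Odd integration by parts (odd Stokes theorem, pointwise form): if `B` is the Berezin
integral on `Λ = ExteriorAlgebra ℝ (Fin m → ℝ)` — the linear functional reading off the
coefficient of the top basis monomial `e_0 ∧ ⋯ ∧ e_{m-1}` in the monomial-basis expansion,
i.e. `B` sends the top monomial to `1` and every other basis monomial to `0` — then for
`ω` of Grassmann parity `p`: `B(∂_α ω * η) = (-1)^(p+1) B(ω * ∂_α η)`; in particular
`B(∂_α x) = 0` for all `x`. -/
theorem berezin_integration_by_parts (m : ℕ) (hm : 1 ≤ m)
    (B : Lam m →ₗ[ℝ] ℝ)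
    (hBtop : B ((((Finset.univ : Finset (Fin m)).sort (· ≤ ·)).map gen).prod) = 1)
    (hBother : ∀ s : Finset (Fin m), s ≠ Finset.univ →
      B (((s.sort (· ≤ ·)).map gen).prod) = 0)
    (α : Fin m) (p : ZMod 2) (ω : Lam m)
    (hω : ω ∈ CliffordAlgebra.evenOdd (0 : QuadraticForm ℝ (Fin m → ℝ)) p)
    (η : Lam m) :
    B (pd α ω * η) = (-1 : ℝ) ^ (p + 1).val * B (ω * pd α η) ∧
    ∀ x : Lam m, B (pd α x) = 0 := by

  have hzero := BerezinAux.B_pd_zero hm B hBother α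
  refine ⟨?_, hzero⟩
  have hp : p = 0 ∨ p = 1 := by
    have h2 : ∀ q : ZMod 2, q = 0 ∨ q = 1 := by decide
    exact h2 p
  rcases hp with rfl | rfl
  · have h := BerezinAux.pd_mul_even α hω η
    have h0 := hzero (ω * η)
    rw [h, map_add] at h0
    have hv : ((0 : ZMod 2) + 1).val = 1 := rfl
    rw [hv, pow_one]
    linarith
  · have h := BerezinAux.pd_mul_odd α hω η
    have h0 := hzero (ω * η)
    rw [h, map_sub] at h0
    have hv : ((1 : ZMod 2) + 1).val = 0 := rfl
    rw [hv, pow_zero, one_mul]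
    linarith
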